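/- arXiv:1306.2871 — 5 statements merged into one kernel-verified Lean document; each statement's English description precedes it below -/
import Mathlib

section
/- Let n ≥ 1 and let k ∈ ℕ^{n+1} satisfy k_0 = 1 and (k_j = 0 ⇒ k_{j+1} = 0) for all 0 ≤ j ≤ n-1. Let k̃ = (k_1,…,k_n,0) be the left shift of k, let u ∈ ℕ^{n+1} be given by u_j = min{1, k̃_j}, and let V(k) = {b ∈ ℕ^{n+1} : u_j ≤ b_j ≤ min{k_j, k̃_j} for all 0 ≤ j ≤ n}. Then for every x ∈ ℝ^{n+1}: a(x,k) = Σ_{b ∈ V(k)} Π_{j=0}^{n} C(k_j,b_j) · C(k̃_j - u_j, b_j - u_j) · (-x_j)^{k̃_j - b_j} · x_j^{k_j - b_j} · (1 - x_j^2)^{b_j}. -/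
/-- Amplitude factor `f^{(p,q)}`. -/
noncomputable def ampF (p q : ℤ) (x : ℝ) : ℝ :=
  if p < 0 ∨ q < 0 then 0
  else if q = 0 then x ^ p.toNat
  else if p = 0 then 0
  else ∑ j ∈ Finset.Icc 1 (min p q).toNat,
    (-1 : ℝ) ^ (q.toNat - j) * (p.toNat.choose j : ℝ) * ((q.toNat - 1).choose (j - 1) : ℝ) *
      x ^ (p.toNat + q.toNat - 2 * j) * (1 - x ^ 2) ^ j

/-- Amplitude polynomial `a(x,k)`. -/
noncomputable def ampA (n : ℕ) (x : Fin (n+1) → ℝ) (k : Fin (n+1) → ℕ) : ℝ :=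
  (if k 0 = 1 then (1:ℝ) else 0) * x (Fin.last n) ^ k (Fin.last n) *
    ∏ j : Fin n, ampF (k j.castSucc) (k j.succ) (x j.castSucc)
/-- Left shift `k̃ = (k_1,…,k_n,0)` of a lattice point `k ∈ ℕ^{n+1}`. -/
def lshift (n : ℕ) (k : Fin (n+1) → ℕ) (j : Fin (n+1)) : ℕ :=
  if h : (j : ℕ) < n then k ⟨(j : ℕ) + 1, by omega⟩ else 0

lemma ampF_eq (p q : ℕ) (x : ℝ) :
    ampF p q x = ∑ b ∈ Finset.Icc (min 1 q) (min p q),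
      (p.choose b : ℝ) * ((q - min 1 q).choose (b - min 1 q) : ℝ) *
        (-x) ^ (q - b) * x ^ (p - b) * (1 - x ^ 2) ^ b := by
  rcases Nat.eq_zero_or_pos q with hq | hq
  · subst hq
    simp [ampF]
  rcases Nat.eq_zero_or_pos p with hp | hp
  · subst hp
    have h1 : min 1 q = 1 := by omega
    have h2 : min 0 q = 0 := by omega
    rw [h1, h2]
    have hq' : (q : ℤ) ≠ 0 := by exact_mod_cast hq.ne'
    simp [ampF, hq', hq.ne']
  have h1 : min 1 q = 1 := by omega
  have hq' : (q : ℤ) ≠ 0 := by exact_mod_cast hq.ne'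
  have hp' : (p : ℤ) ≠ 0 := by exact_mod_cast hp.ne'
  rw [ampF]
  rw [if_neg (by push_neg; constructor <;> positivity), if_neg hq', if_neg hp']
  have hmin : (min (p:ℤ) (q:ℤ)).toNat = min p q := by
    rw [← Nat.cast_min, Int.toNat_natCast]
  rw [hmin, h1]
  apply Finset.sum_congr rfl
  intro b hb
  simp only [Finset.mem_Icc] at hb
  have hbp : b ≤ p := le_trans hb.2 (min_le_left _ _)
  have hbq : b ≤ q := le_trans hb.2 (min_le_right _ _)
  have hx2 : x ^ (p + q - 2 * b) = x ^ (q - b) * x ^ (p - b) := by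
    rw [← pow_add]; congr 1; omega
  simp only [Int.toNat_natCast]
  rw [hx2, neg_pow]
  ring

/-- explicit multinomial expansion of the amplitude polynomial `a(x,k)`
    over the box `V(k)` -/
theorem amplitude_polynomial_expansion (n : ℕ) (hn : 1 ≤ n) (k : Fin (n+1) → ℕ)
    (hk0 : k 0 = 1) (hk : ∀ j : Fin n, k j.castSucc = 0 → k j.succ = 0)
    (x : Fin (n+1) → ℝ) :
    ampA n x k =
      ∑ b ∈ Fintype.piFinset (fun j : Fin (n+1) =>
          Finset.Icc (min 1 (lshift n k j)) (min (k j) (lshift n k j))),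
        ∏ j : Fin (n+1),
          ((k j).choose (b j) : ℝ) *
            ((lshift n k j - min 1 (lshift n k j)).choose
              (b j - min 1 (lshift n k j)) : ℝ) *
            (-(x j)) ^ (lshift n k j - b j) * (x j) ^ (k j - b j) *
            (1 - x j ^ 2) ^ (b j) := by
  rw [← Finset.prod_univ_sum
    (fun j : Fin (n+1) => Finset.Icc (min 1 (lshift n k j)) (min (k j) (lshift n k j)))
    (fun j b => ((k j).choose b : ℝ) *
      ((lshift n k j - min 1 (lshift n k j)).choose (b - min 1 (lshift n k j)) : ℝ) *
      (-(x j)) ^ (lshift n k j - b) * (x j) ^ (k j - b) * (1 - x j ^ 2) ^ b)]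
  rw [ampA, hk0, if_pos rfl, one_mul]
  rw [Fin.prod_univ_castSucc]
  have hlast : lshift n k (Fin.last n) = 0 := by simp [lshift]
  have hcs : ∀ j : Fin n, lshift n k j.castSucc = k j.succ := by
    intro j
    rw [lshift, dif_pos (by simpa using j.isLt)]
    congr 1
  rw [mul_comm]
  congr 1
  · apply Finset.prod_congr rfl
    intro j _
    rw [ampF_eq, hcs j]
  · rw [hlast]
    simp
end

section
/- Let p, q be integers with min{p,q} ≥ 0, and set α = |p - q| and N = min{p,q}. Then for every x ∈ [-1,1]: if p ≤ q then g^{(p,q)}(x) = (-x)^{α} √(1 - x^2) · P^{(α,0)}_N(1 - 2x^2), and if p > q then g^{(p,q)}(x) = x^{α} √(1 - x^2) · P^{(α,0)}_N(1 - 2x^2). -/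
/-- Amplitude factor `g^{(p,q)}`. -/
noncomputable def ampG (p q : ℤ) (x : ℝ) : ℝ :=
  if p < 0 ∨ q < 0 then 0
  else Real.sqrt (1 - x ^ 2) * ∑ j ∈ Finset.Icc 0 (min p q).toNat,
    (-1 : ℝ) ^ (q.toNat - j) * (p.toNat.choose j : ℝ) * (q.toNat.choose j : ℝ) *
      x ^ (p.toNat + q.toNat - 2 * j) * (1 - x ^ 2) ^ j

/-- Amplitude quasi-polynomial `b(x,k)`. -/
noncomputable def ampB (n : ℕ) (x : Fin (n+1) → ℝ) (k : Fin (n+1) → ℕ) : ℝ :=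
  (if k 0 = 0 then (1:ℝ) else 0) * Real.sqrt (1 - x (Fin.last n) ^ 2) *
    x (Fin.last n) ^ k (Fin.last n) *
    ∏ j : Fin n, ampG (k j.castSucc) (k j.succ) (x j.castSucc)
/-- Jacobi polynomial `P^{(α,β)}_N`. -/
noncomputable def jacobiP (a b N : ℕ) (z : ℝ) : ℝ :=
  ∑ j ∈ Finset.range (N + 1),
    ((N + a).choose (N - j) : ℝ) * ((N + b).choose j : ℝ) *
      ((z - 1) / 2) ^ j * ((z + 1) / 2) ^ (N - j)

lemma ampG_key_le (P Q : ℕ) (hPQ : P ≤ Q) (x : ℝ) :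
    ∑ j ∈ Finset.Icc 0 P, (-1 : ℝ) ^ (Q - j) * (P.choose j : ℝ) * (Q.choose j : ℝ) *
      x ^ (P + Q - 2 * j) * (1 - x ^ 2) ^ j
    = (-x) ^ (Q - P) * jacobiP (Q - P) 0 P (1 - 2 * x ^ 2) := by
  rw [show Finset.Icc 0 P = Finset.range (P + 1) by ext; simp [Nat.lt_succ_iff]]
  unfold jacobiP
  rw [Finset.mul_sum, ← Finset.sum_range_reflect]
  refine Finset.sum_congr rfl fun j hj => ?_
  rw [Finset.mem_range] at hj
  have hjP : j ≤ P := by omega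
  rw [show P + 1 - 1 - j = P - j by omega]
  rw [show Q - (P - j) = (Q - P) + j by omega]
  rw [show P + Q - 2 * (P - j) = (Q - P) + 2 * j by omega]
  rw [show P + (Q - P) = Q by omega, Nat.add_zero]
  rw [Nat.choose_symm hjP]
  rw [show (1 - 2 * x ^ 2 - 1) / 2 = -(x ^ 2) by ring]
  rw [show (1 - 2 * x ^ 2 + 1) / 2 = 1 - x ^ 2 by ring]
  ring

lemma ampG_key_ge (P Q : ℕ) (hPQ : Q ≤ P) (x : ℝ) :
    ∑ j ∈ Finset.Icc 0 Q, (-1 : ℝ) ^ (Q - j) * (P.choose j : ℝ) * (Q.choose j : ℝ) *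
      x ^ (P + Q - 2 * j) * (1 - x ^ 2) ^ j
    = x ^ (P - Q) * jacobiP (P - Q) 0 Q (1 - 2 * x ^ 2) := by
  rw [show Finset.Icc 0 Q = Finset.range (Q + 1) by ext; simp [Nat.lt_succ_iff]]
  unfold jacobiP
  rw [Finset.mul_sum, ← Finset.sum_range_reflect]
  refine Finset.sum_congr rfl fun j hj => ?_
  rw [Finset.mem_range] at hj
  have hjQ : j ≤ Q := by omega
  rw [show Q + 1 - 1 - j = Q - j by omega]
  rw [show Q - (Q - j) = j by omega]
  rw [show P + Q - 2 * (Q - j) = (P - Q) + 2 * j by omega]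
  rw [show Q + (P - Q) = P by omega, Nat.add_zero]
  rw [Nat.choose_symm hjQ]
  rw [show (1 - 2 * x ^ 2 - 1) / 2 = -(x ^ 2) by ring]
  rw [show (1 - 2 * x ^ 2 + 1) / 2 = 1 - x ^ 2 by ring]
  ring

/-- the amplitude factor `g^{(p,q)}` in terms of Jacobi polynomials
    `P^{(α,0)}_N` with `α = |p-q|`, `N = min{p,q}`. -/
theorem ampG_eq_jacobi (p q : ℤ) (h : 0 ≤ min p q) (x : ℝ) (hx : x ∈ Set.Icc (-1 : ℝ) 1) :
    (p ≤ q → ampG p q x =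
      (-x) ^ (p - q).natAbs * Real.sqrt (1 - x ^ 2) *
        jacobiP (p - q).natAbs 0 (min p q).toNat (1 - 2 * x ^ 2)) ∧
    (q < p → ampG p q x =
      x ^ (p - q).natAbs * Real.sqrt (1 - x ^ 2) *
        jacobiP (p - q).natAbs 0 (min p q).toNat (1 - 2 * x ^ 2)) := by
  have hp : 0 ≤ p := le_trans h (min_le_left _ _)
  have hq : 0 ≤ q := le_trans h (min_le_right _ _)
  have hnotif : ¬ (p < 0 ∨ q < 0) := by omega
  constructor
  · intro hpq
    have hN : (min p q).toNat = p.toNat := by omega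
    have hA : (p - q).natAbs = q.toNat - p.toNat := by omega
    have hle : p.toNat ≤ q.toNat := by omega
    rw [ampG, if_neg hnotif, hN, hA, ampG_key_le p.toNat q.toNat hle x]
    ring
  · intro hqp
    have hN : (min p q).toNat = q.toNat := by omega
    have hA : (p - q).natAbs = p.toNat - q.toNat := by omega
    have hle : q.toNat ≤ p.toNat := by omega
    rw [ampG, if_neg hnotif, hN, hA, ampG_key_ge p.toNat q.toNat hle x]
    ring
end

section
/- Let n ≥ 1 and let x ∈ [-1,1]^{n+1} be a boundary point of the cube, i.e. max_{0 ≤ j ≤ n} |x_j| = 1. Then Σ_{k ∈ ℕ^{n+1}} a(x,k)^2 = 1 (the family being summable); that is, the polydisk function φ_x with Taylor coefficients a(x,k) has H^2 norm exactly 1. -/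
open Finset

set_option linter.unusedVariables false

lemma ampF_nat (p q : ℕ) (x : ℝ) :
    ampF p q x = if q = 0 then x ^ p else if p = 0 then 0 else
      ∑ j ∈ Finset.Icc 1 (min p q),
        (-1 : ℝ) ^ (q - j) * (p.choose j : ℝ) * ((q - 1).choose (j - 1) : ℝ) *
          x ^ (p + q - 2 * j) * (1 - x ^ 2) ^ j := by
  unfold ampF
  have h1 : ¬((p:ℤ) < 0 ∨ (q:ℤ) < 0) := by push_neg; exact ⟨Int.natCast_nonneg p, Int.natCast_nonneg q⟩
  rw [if_neg h1]
  have h2 : (min (p:ℤ) q).toNat = min p q := by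
    rw [← Nat.cast_min, Int.toNat_natCast]
  simp [h2, Int.toNat_natCast, Nat.cast_eq_zero]

/-- decomposition pieces -/
noncomputable def ampR (p : ℕ) (x : ℝ) (j q : ℕ) : ℝ :=
  if j = 0 then (if q = 0 then x ^ p else 0)
  else if j ≤ q then
    (-1 : ℝ) ^ (q - j) * (p.choose j : ℝ) * ((q - 1).choose (j - 1) : ℝ) *
      x ^ (p + q - 2 * j) * (1 - x ^ 2) ^ j
  else 0

lemma ampF_eq_sum_ampR (p q : ℕ) (hp : 1 ≤ p) (x : ℝ) :
    ampF p q x = ∑ j ∈ range (p + 1), ampR p x j q := by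
  rw [ampF_nat]
  rcases Nat.eq_zero_or_pos q with hq | hq
  · subst hq
    rw [if_pos rfl]
    rw [Finset.sum_eq_single 0]
    · simp [ampR]
    · intro j hj hj0
      simp only [ampR, if_neg hj0]
      rw [if_neg (by omega)]
    · intro h; simp at h
  · rw [if_neg (by omega), if_neg (by omega)]
    have hsub : Finset.Icc 1 (min p q) ⊆ range (p + 1) := by
      intro j hj; simp only [Finset.mem_Icc] at hj; simp only [Finset.mem_range]; omega
    have hvan : ∀ j ∈ range (p + 1), j ∉ Finset.Icc 1 (min p q) → ampR p x j q = 0 := by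
      intro j hj hj'
      simp only [Finset.mem_range] at hj
      simp only [Finset.mem_Icc] at hj'
      rcases Nat.eq_zero_or_pos j with h0 | h0
      · subst h0
        show (if (0:ℕ) = 0 then (if q = 0 then x ^ p else 0) else _) = 0
        rw [if_pos rfl, if_neg (by omega)]
      · simp only [ampR, if_neg (by omega : ¬ j = 0)]
        rw [if_neg (by omega)]
    rw [← Finset.sum_subset hsub hvan]
    apply Finset.sum_congr rfl
    intro j hj
    simp only [Finset.mem_Icc] at hj
    simp only [ampR, if_neg (by omega : ¬ j = 0), if_pos (by omega : j ≤ q)]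

lemma ampR_eq_zero_of_lt {p j q : ℕ} (x : ℝ) (hj : j ≠ 0) (h : q < j) : ampR p x j q = 0 := by
  simp only [ampR, if_neg hj]
  rw [if_neg (by omega)]

lemma ampR_add (p : ℕ) (x : ℝ) (i m : ℕ) :
    ampR p x (i+1) (m + (i+1)) =
      (-1 : ℝ) ^ m * (p.choose (i+1) : ℝ) * ((m + i).choose i : ℝ) *
        x ^ (p + (m + (i+1)) - 2 * (i+1)) * (1 - x ^ 2) ^ (i+1) := by
  simp only [ampR, if_neg (by omega : ¬ i + 1 = 0), if_pos (by omega : i + 1 ≤ m + (i+1))]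
  rw [show m + (i+1) - (i+1) = m from by omega, show m + (i+1) - 1 = m + i from by omega,
    show (i+1) - 1 = i from by omega]

lemma hasSum_ampR_complex {x : ℝ} (hx : |x| < 1) {z : ℂ} (hz : ‖z‖ = 1)
    (p j : ℕ) (hj : j ≤ p) :
    HasSum (fun q : ℕ => (ampR p x j q : ℂ) * z ^ q)
      ((p.choose j : ℂ) * (x : ℂ) ^ (p - j) *
        (((1 : ℂ) - (x : ℂ) ^ 2) * z / (1 + (x : ℂ) * z)) ^ j) := by
  have hxz : ‖-((x : ℂ) * z)‖ < 1 := by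
    rw [norm_neg, norm_mul, hz, mul_one, Complex.norm_real, Real.norm_eq_abs]
    exact hx
  have hden : (1 : ℂ) + (x : ℂ) * z ≠ 0 := by
    intro h
    have : ‖(1:ℂ)‖ = ‖-((x:ℂ)*z)‖ := by
      rw [show (1:ℂ) = -((x:ℂ)*z) from by linear_combination h]
    rw [norm_one] at this
    exact absurd this (by linarith)
  rcases Nat.eq_zero_or_pos j with h0 | h0
  · subst h0
    have : (fun q : ℕ => (ampR p x 0 q : ℂ) * z ^ q)
        = fun q : ℕ => if q = 0 then ((x : ℂ) ^ p) else 0 := by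
      funext q
      show ((if (0:ℕ) = 0 then (if q = 0 then x ^ p else 0) else _ : ℝ) : ℂ) * z ^ q = _
      rw [if_pos rfl]
      split_ifs with h
      · subst h; push_cast; ring
      · simp
    rw [this]
    simpa using hasSum_ite_eq (0 : ℕ) ((x:ℂ)^p)
  · obtain ⟨i, rfl⟩ : ∃ i, j = i + 1 := ⟨j - 1, by omega⟩
    set c : ℂ := (p.choose (i+1) : ℂ) * (x:ℂ) ^ (p - (i+1)) * ((1:ℂ) - (x:ℂ)^2) ^ (i+1) * z ^ (i+1) with hc
    have H := (hasSum_choose_mul_geometric_of_norm_lt_one (𝕜 := ℂ) i hxz).mul_left c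
    have heq : (fun m : ℕ => c * (((m + i).choose i : ℂ) * (-((x:ℂ) * z)) ^ m))
        = fun m : ℕ => (ampR p x (i+1) (m + (i+1)) : ℂ) * z ^ (m + (i+1)) := by
      funext m
      rw [ampR_add]
      have hexp : p + (m + (i+1)) - 2 * (i+1) = (p - (i+1)) + m := by omega
      rw [hexp, hc]
      push_cast
      ring
    rw [heq] at H
    have H2 := (hasSum_nat_add_iff (f := fun q : ℕ => (ampR p x (i+1) q : ℂ) * z ^ q) (i+1)).mp H
    have hzero : ∑ q ∈ range (i+1), (ampR p x (i+1) q : ℂ) * z ^ q = 0 := by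
      apply Finset.sum_eq_zero
      intro q hq
      rw [ampR_eq_zero_of_lt x (by omega) (Finset.mem_range.mp hq)]
      simp
    rw [hzero, add_zero] at H2
    have h1 : (1:ℂ) - (-((x:ℂ)*z)) = 1 + (x:ℂ)*z := by ring
    have hval : c * (1 / (1 - (-((x:ℂ) * z))) ^ (i+1))
        = (p.choose (i+1) : ℂ) * (x : ℂ) ^ (p - (i+1)) *
          (((1 : ℂ) - (x : ℂ) ^ 2) * z / (1 + (x : ℂ) * z)) ^ (i+1) := by
      rw [h1, hc, div_pow, mul_pow, one_div, div_eq_mul_inv]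
      ring
    rw [hval] at H2
    exact H2

lemma summable_abs_ampR {x : ℝ} (hx : |x| < 1) (p j : ℕ) (hj : j ≤ p) :
    Summable (fun q : ℕ => |ampR p x j q|) := by
  rcases Nat.eq_zero_or_pos j with h0 | h0
  · subst h0
    apply ((hasSum_ite_eq (0 : ℕ) (|x ^ p|)).summable).congr
    intro q
    have hA : ampR p x 0 q = if q = 0 then x ^ p else 0 := if_pos rfl
    rw [hA]
    split_ifs <;> simp
  · obtain ⟨i, rfl⟩ : ∃ i, j = i + 1 := ⟨j - 1, by omega⟩
    rw [← summable_nat_add_iff (i+1)]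
    have hx' : ‖|x|‖ < 1 := by rwa [Real.norm_eq_abs, abs_abs]
    apply (((hasSum_choose_mul_geometric_of_norm_lt_one (𝕜 := ℝ) i hx').mul_left
      ((p.choose (i+1) : ℝ) * |x| ^ (p - (i+1)) * |1 - x ^ 2| ^ (i+1))).summable).congr
    intro m
    rw [ampR_add, show p + (m + (i+1)) - 2 * (i+1) = (p - (i+1)) + m from by omega, pow_add]
    simp only [abs_mul, abs_pow, abs_neg, abs_one, one_pow, Nat.abs_cast]
    ring

lemma hasSum_ampF_complex (p : ℕ) (hp : 1 ≤ p) {x : ℝ} (hx : |x| < 1) {z : ℂ} (hz : ‖z‖ = 1) :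
    HasSum (fun q : ℕ => ((ampF p q x : ℝ) : ℂ) * z ^ q)
      ((((x : ℂ) + z) / (1 + (x : ℂ) * z)) ^ p) := by
  have hden : (1 : ℂ) + (x : ℂ) * z ≠ 0 := by
    intro h
    have h2 : ‖-((x:ℂ)*z)‖ < 1 := by
      rw [norm_neg, norm_mul, hz, mul_one, Complex.norm_real, Real.norm_eq_abs]; exact hx
    have : ‖(1:ℂ)‖ = ‖-((x:ℂ)*z)‖ := by
      rw [show (1:ℂ) = -((x:ℂ)*z) from by linear_combination h]
    rw [norm_one] at this
    linarith
  have key := hasSum_sum (s := range (p + 1))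
    (f := fun j (q : ℕ) => (ampR p x j q : ℂ) * z ^ q)
    (a := fun j => (p.choose j : ℂ) * (x : ℂ) ^ (p - j) *
      (((1 : ℂ) - (x : ℂ) ^ 2) * z / (1 + (x : ℂ) * z)) ^ j)
    (fun j hj => hasSum_ampR_complex hx hz p j (by simpa using Nat.lt_succ_iff.mp (Finset.mem_range.mp hj)))
  have hfun : (fun q : ℕ => ∑ j ∈ range (p+1), (ampR p x j q : ℂ) * z ^ q)
      = fun q : ℕ => ((ampF p q x : ℝ) : ℂ) * z ^ q := by
    funext q
    rw [← Finset.sum_mul, ampF_eq_sum_ampR p q hp x]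
    push_cast
    ring
  have hval : ∑ j ∈ range (p+1), (p.choose j : ℂ) * (x : ℂ) ^ (p - j) *
      (((1 : ℂ) - (x : ℂ) ^ 2) * z / (1 + (x : ℂ) * z)) ^ j
      = (((x : ℂ) + z) / (1 + (x : ℂ) * z)) ^ p := by
    have hsplit : ((x : ℂ) + z) / (1 + (x : ℂ) * z)
        = ((1 : ℂ) - (x : ℂ) ^ 2) * z / (1 + (x : ℂ) * z) + (x : ℂ) := by
      field_simp
      ring
    rw [hsplit, add_pow]
    apply Finset.sum_congr rfl
    intro j hj
    ring
  rw [hfun, hval] at key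
  exact key

lemma summable_abs_ampF (p : ℕ) (hp : 1 ≤ p) {x : ℝ} (hx : |x| < 1) :
    Summable (fun q : ℕ => |ampF p q x|) := by
  have hs : Summable (fun q : ℕ => ∑ j ∈ range (p+1), |ampR p x j q|) := by
    exact summable_sum fun j hj =>
      summable_abs_ampR hx p j (by simpa using Nat.lt_succ_iff.mp (Finset.mem_range.mp hj))
  apply Summable.of_nonneg_of_le (fun q => abs_nonneg _) _ hs
  intro q
  rw [ampF_eq_sum_ampR p q hp x]
  exact Finset.abs_sum_le_sum_abs _ _

open MeasureTheory Complex

lemma aux_norm_circle {x : ℝ} {z : ℂ} (hz : ‖z‖ = 1) :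
    ‖(x : ℂ) + z‖ = ‖1 + (x : ℂ) * z‖ := by
  have h1 : ((1 : ℂ) + (x : ℂ) * (starRingEnd ℂ) z) * z = z + (x : ℂ) := by
    have hzz : (starRingEnd ℂ) z * z = 1 := by
      rw [mul_comm, Complex.mul_conj]
      norm_cast
      rw [← Complex.sq_norm z, hz]
      norm_num
    calc ((1 : ℂ) + (x : ℂ) * (starRingEnd ℂ) z) * z
        = z + (x:ℂ) * ((starRingEnd ℂ) z * z) := by ring
      _ = z + (x : ℂ) := by rw [hzz, mul_one]
  have h2 : ‖(1 : ℂ) + (x : ℂ) * (starRingEnd ℂ) z‖ = ‖1 + (x : ℂ) * z‖ := by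
    rw [show (1 : ℂ) + (x : ℂ) * (starRingEnd ℂ) z = (starRingEnd ℂ) (1 + (x:ℂ) * z) from by
      rw [map_add, map_mul, map_one, Complex.conj_ofReal]]
    exact RCLike.norm_conj _
  calc ‖(x : ℂ) + z‖ = ‖z + (x : ℂ)‖ := by rw [add_comm]
    _ = ‖((1 : ℂ) + (x : ℂ) * (starRingEnd ℂ) z) * z‖ := by rw [h1]
    _ = ‖(1 : ℂ) + (x : ℂ) * (starRingEnd ℂ) z‖ := by rw [norm_mul, hz, mul_one]
    _ = ‖1 + (x : ℂ) * z‖ := h2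

lemma aux_den {x : ℝ} (hx : |x| < 1) {z : ℂ} (hz : ‖z‖ = 1) :
    (1 : ℂ) + (x : ℂ) * z ≠ 0 := by
  intro h
  have h2 : ‖-((x:ℂ)*z)‖ < 1 := by
    rw [norm_neg, norm_mul, hz, mul_one, Complex.norm_real, Real.norm_eq_abs]; exact hx
  have : ‖(1:ℂ)‖ = ‖-((x:ℂ)*z)‖ := by
    rw [show (1:ℂ) = -((x:ℂ)*z) from by linear_combination h]
  rw [norm_one] at this
  linarith

lemma aux_ratio_norm {x : ℝ} (hx : |x| < 1) {z : ℂ} (hz : ‖z‖ = 1) :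
    ‖(((x : ℂ) + z) / (1 + (x : ℂ) * z))‖ = 1 := by
  rw [norm_div, aux_norm_circle hz, div_self]
  rw [ne_eq, norm_eq_zero]
  exact aux_den hx hz

lemma fourierCoeff_fourier_eq {T : ℝ} [hT : Fact (0 < T)] (m n : ℤ) :
    fourierCoeff (⇑(@fourier T m)) n = if n = m then (1:ℂ) else 0 := by
  rw [← fourierCoeff_toLp (fourier m) n, ← fourierBasis_repr]
  rw [HilbertBasis.repr_apply_apply]
  have h1 : (fourierBasis (T := T)) n = fourierLp 2 n := by rw [coe_fourierBasis]
  rw [h1]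
  exact orthonormal_iff_ite.mp orthonormal_fourier n m

lemma fourier_one_pow {T : ℝ} (θ : AddCircle T) (q : ℕ) :
    (fourier 1 θ : ℂ) ^ q = fourier (q : ℤ) θ := by
  induction q with
  | zero => simp [fourier_zero]
  | succ m ih =>
      rw [pow_succ, ih, ← fourier_add]
      norm_cast

lemma norm_fourier_eq_one {T : ℝ} (n : ℤ) (θ : AddCircle T) : ‖(fourier n θ : ℂ)‖ = 1 := by
  rw [fourier_apply]
  exact Circle.norm_coe _

lemma hasSum_sq_ampF_of_lt (p : ℕ) (hp : 1 ≤ p) {x : ℝ} (hx : |x| < 1) :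
    HasSum (fun q : ℕ => (ampF p q x) ^ 2) 1 := by
  haveI : Fact (0 < (1:ℝ)) := ⟨one_pos⟩
  -- the inner function on the circle
  have hcont : Continuous (fun θ : AddCircle (1:ℝ) =>
      (((x : ℂ) + fourier 1 θ) / (1 + (x : ℂ) * fourier 1 θ)) ^ p) := by
    apply Continuous.pow
    apply Continuous.div
    · exact continuous_const.add (fourier 1).continuous
    · exact continuous_const.add (continuous_const.mul (fourier 1).continuous)
    · intro θ
      exact aux_den hx (norm_fourier_eq_one 1 θ)
  set Fc : C(AddCircle (1:ℝ), ℂ) := ⟨_, hcont⟩ with hFc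
  set C : ℤ → ℂ := fun n => ((ampF p n x : ℝ) : ℂ) with hC
  have hCneg : ∀ n : ℤ, n ∉ Set.range ((↑) : ℕ → ℤ) → C n = 0 := by
    intro n hn
    have hneg : n < 0 := by
      by_contra h
      exact hn ⟨n.toNat, Int.toNat_of_nonneg (by omega)⟩
    have : ampF p n x = 0 := by
      unfold ampF
      rw [if_pos (Or.inr hneg)]
    simp [hC, this]
  -- summability of coefficients
  have habs : Summable (fun q : ℕ => |ampF p q x|) := summable_abs_ampF p hp hx
  have habs_int : Summable (fun n : ℤ => ‖C n‖) := by
    rw [← Function.Injective.summable_iff Nat.cast_injective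
      (fun n hn => by rw [hCneg n hn, norm_zero])]
    apply habs.congr
    intro q
    simp [hC, Complex.norm_real]
  -- pointwise Fourier expansion
  have hFsum : ∀ θ : AddCircle (1:ℝ), HasSum (fun n : ℤ => C n * fourier n θ) (Fc θ) := by
    intro θ
    have h1 := hasSum_ampF_complex p hp hx (norm_fourier_eq_one (T := (1:ℝ)) 1 θ)
    have h2 : (fun q : ℕ => ((ampF p q x : ℝ) : ℂ) * (fourier 1 θ : ℂ) ^ q)
        = fun q : ℕ => C (q : ℤ) * fourier (q : ℤ) θ := by
      funext q
      rw [fourier_one_pow]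
    rw [h2] at h1
    exact (Function.Injective.hasSum_iff Nat.cast_injective
      (fun n hn => by rw [hCneg n hn, zero_mul])).mp h1
  -- Fourier coefficients
  have hcoeff : ∀ n : ℤ, fourierCoeff (⇑Fc) n = C n := by
    intro n
    have heqF : ⇑Fc = fun θ => ∑' m : ℤ, C m * fourier m θ := by
      funext θ
      exact ((hFsum θ).tsum_eq).symm
    rw [heqF]
    unfold fourierCoeff
    have hswap : ∀ θ : AddCircle (1:ℝ),
        (fourier (-n) θ : ℂ) • (∑' m : ℤ, C m * fourier m θ)
          = ∑' m : ℤ, (fourier (-n) θ : ℂ) • (C m * fourier m θ) := by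
      intro θ
      simp only [smul_eq_mul]
      exact (tsum_mul_left).symm
    simp_rw [hswap]
    rw [MeasureTheory.integral_tsum]
    · have hterm : ∀ m : ℤ, (∫ θ : AddCircle (1:ℝ),
          (fourier (-n) θ : ℂ) • (C m * fourier m θ) ∂AddCircle.haarAddCircle)
            = C m * (if n = m then 1 else 0) := by
        intro m
        have : (∫ θ : AddCircle (1:ℝ),
            (fourier (-n) θ : ℂ) • (C m * fourier m θ) ∂AddCircle.haarAddCircle)
              = fourierCoeff (fun θ => C m * fourier m θ) n := rfl
        rw [this, fourierCoeff.const_mul, fourierCoeff_fourier_eq]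
      simp_rw [hterm]
      have : (fun m : ℤ => C m * (if n = m then 1 else 0))
          = fun m : ℤ => if m = n then C n else 0 := by
        funext m
        by_cases h : m = n
        · subst h; simp
        · rw [if_neg h, if_neg (fun hh => h hh.symm), mul_zero]
      rw [this]
      exact tsum_ite_eq n (fun _ => C n)
    · intro m
      apply Continuous.aestronglyMeasurable
      exact ((fourier (-n)).continuous).smul (continuous_const.mul (fourier m).continuous)
    · have hnorm : ∀ m : ℤ, (∫⁻ θ : AddCircle (1:ℝ),
          ‖(fourier (-n) θ : ℂ) • (C m * fourier m θ)‖ₑ ∂AddCircle.haarAddCircle) = ‖C m‖₊ := by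
        intro m
        have h1 : ∀ θ : AddCircle (1:ℝ),
            (‖(fourier (-n) θ : ℂ) • (C m * fourier m θ)‖ₑ : ENNReal) = (‖C m‖₊ : ENNReal) := by
          intro θ
          rw [enorm_eq_nnnorm]
          congr 1
          ext
          simp only [smul_eq_mul, coe_nnnorm, norm_mul, norm_fourier_eq_one, one_mul, mul_one]
        simp_rw [h1]
        rw [MeasureTheory.lintegral_const, measure_univ, mul_one]
      simp_rw [hnorm]
      rw [ENNReal.tsum_coe_ne_top_iff_summable]
      rw [← NNReal.summable_coe]
      apply habs_int.congr
      intro m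
      simp [coe_nnnorm]
  -- Parseval
  have hpar := tsum_sq_fourierCoeff (ContinuousMap.toLp 2 AddCircle.haarAddCircle ℂ Fc)
  have hc2 : ∀ n : ℤ,
      fourierCoeff (↑↑((ContinuousMap.toLp 2 AddCircle.haarAddCircle ℂ) Fc)) n = C n :=
    fun n => (fourierCoeff_toLp Fc n).trans (hcoeff n)
  have hFnorm : ∀ θ : AddCircle (1:ℝ), ‖Fc θ‖ = 1 := by
    intro θ
    show ‖(((x : ℂ) + fourier 1 θ) / (1 + (x : ℂ) * fourier 1 θ)) ^ p‖ = 1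
    rw [norm_pow, aux_ratio_norm hx (norm_fourier_eq_one 1 θ), one_pow]
  have hae : (fun t : AddCircle (1:ℝ) =>
      ‖(↑↑((ContinuousMap.toLp 2 AddCircle.haarAddCircle ℂ) Fc) : AddCircle (1:ℝ) → ℂ) t‖ ^ 2)
        =ᵐ[AddCircle.haarAddCircle] (fun _ => (1:ℝ)) := by
    filter_upwards [ContinuousMap.coeFn_toLp (p := 2) AddCircle.haarAddCircle (𝕜 := ℂ) Fc]
      with θ hθ
    rw [hθ, hFnorm θ, one_pow]
  rw [MeasureTheory.integral_congr_ae hae, MeasureTheory.integral_const, probReal_univ] at hpar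
  simp only [ENNReal.toReal_one, smul_eq_mul, one_mul, mul_one] at hpar
  simp_rw [hc2] at hpar
  -- summability of squares
  have hs2 : Summable (fun n : ℤ => ‖C n‖ ^ 2) := by
    apply Summable.of_norm_bounded_eventually (g := fun n => ‖C n‖) habs_int
    have hev : ∀ᶠ n in Filter.cofinite, ‖C n‖ ≤ 1 :=
      Filter.Tendsto.eventually_le_const zero_lt_one habs_int.tendsto_cofinite_zero
    filter_upwards [hev] with n hn
    rw [Real.norm_eq_abs, _root_.abs_of_nonneg (by positivity : (0:ℝ) ≤ ‖C n‖ ^ 2)]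
    exact pow_le_of_le_one (norm_nonneg _) hn (by norm_num)
  have hZ : HasSum (fun n : ℤ => ‖C n‖ ^ 2) 1 := hs2.hasSum_iff.mpr hpar
  have hres := (Function.Injective.hasSum_iff (f := fun n : ℤ => ‖C n‖ ^ 2)
    Nat.cast_injective (fun n hn => by have h0 := hCneg n hn; simp [h0])).mpr hZ
  have hfin : ((fun n : ℤ => ‖C n‖ ^ 2) ∘ ((↑) : ℕ → ℤ)) = fun q : ℕ => (ampF p q x) ^ 2 := by
    funext q
    simp only [Function.comp_apply, hC, Complex.norm_real, Real.norm_eq_abs, _root_.sq_abs]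
  rwa [hfin] at hres

lemma ampF_boundary (p q : ℕ) {x : ℝ} (hx : |x| = 1) :
    ampF p q x = if q = 0 then x ^ p else 0 := by
  rw [ampF_nat]
  have hx2 : x ^ 2 = 1 := by rw [← _root_.sq_abs, hx, one_pow]
  by_cases hq : q = 0
  · simp [hq]
  · rw [if_neg hq, if_neg hq]
    by_cases hp : p = 0
    · simp [hp]
    · rw [if_neg hp]
      apply Finset.sum_eq_zero
      intro j hj
      simp only [Finset.mem_Icc] at hj
      rw [hx2, sub_self, zero_pow (by omega : j ≠ 0), mul_zero]

lemma ampF_zero_left (q : ℕ) (x : ℝ) :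
    ampF 0 q x = if q = 0 then 1 else 0 := by
  rw [show (0:ℤ) = ((0:ℕ):ℤ) from rfl, ampF_nat]
  by_cases hq : q = 0
  · simp [hq]
  · simp [hq]

lemma hasSum_sq_ampF (p : ℕ) {x : ℝ} (hx : |x| ≤ 1) :
    HasSum (fun q : ℕ => (ampF p q x) ^ 2) 1 := by
  rcases lt_or_eq_of_le hx with h1 | h1
  · rcases Nat.eq_zero_or_pos p with hp | hp
    · subst hp
      simp only [Nat.cast_zero]
      have : (fun q : ℕ => (ampF 0 q x) ^ 2) = fun q : ℕ => if q = 0 then 1 else 0 := by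
        funext q
        rw [ampF_zero_left]
        split_ifs
        · exact one_pow 2
        · exact zero_pow two_ne_zero
      rw [this]
      exact hasSum_ite_eq 0 1
    · exact hasSum_sq_ampF_of_lt p hp h1
  · have h1' : |x| = 1 := h1
    have hx2 : x ^ 2 = 1 := by rw [← _root_.sq_abs, h1', one_pow]
    have : (fun q : ℕ => (ampF p q x) ^ 2) = fun q : ℕ => if q = 0 then 1 else 0 := by
      funext q
      rw [ampF_boundary p q h1']
      split_ifs
      · rw [← pow_mul, mul_comm p 2, pow_mul, hx2, one_pow]
      · exact zero_pow two_ne_zero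
    rw [this]
    exact hasSum_ite_eq 0 1

/-! ### Multivariable telescoping in `ℝ≥0∞` -/

open scoped ENNReal

noncomputable def ampW : (m : ℕ) → (Fin (m+1) → ℝ) → ℕ → ℝ≥0∞
  | 0, y, p => ENNReal.ofReal ((y 0 ^ p) ^ 2)
  | (m+1), y, p => ∑' q : ℕ,
      ENNReal.ofReal ((ampF p q (y 0)) ^ 2) * ampW m (fun i => y i.succ) q

lemma ampW_zero : ∀ (m : ℕ) (y : Fin (m+1) → ℝ), ampW m y 0 = 1 := by
  intro m
  induction m with
  | zero => intro y; simp [ampW]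
  | succ m ih =>
      intro y
      show (∑' q : ℕ, ENNReal.ofReal ((ampF 0 q (y 0)) ^ 2) * ampW m (fun i => y i.succ) q) = 1
      rw [tsum_eq_single 0]
      · rw [ampF_zero_left, if_pos rfl, one_pow, ENNReal.ofReal_one, one_mul, ih]
      · intro q hq
        rw [ampF_zero_left, if_neg hq, zero_pow two_ne_zero, ENNReal.ofReal_zero, zero_mul]

lemma ofReal_tsum_sq_ampF (p : ℕ) {x : ℝ} (hx : |x| ≤ 1) :
    (∑' q : ℕ, ENNReal.ofReal ((ampF p q x) ^ 2)) = 1 := by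
  have h := hasSum_sq_ampF p hx
  rw [← ENNReal.ofReal_tsum_of_nonneg (fun q => sq_nonneg _) h.summable, h.tsum_eq,
    ENNReal.ofReal_one]

lemma ampW_boundary : ∀ (m : ℕ) (y : Fin (m+1) → ℝ), (∀ i, |y i| ≤ 1) → (∃ i, |y i| = 1) →
    ∀ p : ℕ, ampW m y p = 1 := by
  intro m
  induction m with
  | zero =>
      intro y _ hb p
      obtain ⟨i, hi⟩ := hb
      have h0 : |y 0| = 1 := by
        have : i = 0 := Fin.fin_one_eq_zero i
        rwa [this] at hi
      have hx2 : y 0 ^ 2 = 1 := by rw [← _root_.sq_abs, h0, one_pow]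
      show ENNReal.ofReal ((y 0 ^ p) ^ 2) = 1
      rw [← pow_mul, mul_comm p 2, pow_mul, hx2, one_pow, ENNReal.ofReal_one]
  | succ m ih =>
      intro y hy hb p
      show (∑' q : ℕ, ENNReal.ofReal ((ampF p q (y 0)) ^ 2) * ampW m (fun i => y i.succ) q) = 1
      by_cases h0 : |y 0| = 1
      · rw [tsum_eq_single 0]
        · rw [ampF_boundary p 0 h0, if_pos rfl, ampW_zero]
          have hx2 : y 0 ^ 2 = 1 := by rw [← _root_.sq_abs, h0, one_pow]
          rw [← pow_mul, mul_comm p 2, pow_mul, hx2, one_pow, ENNReal.ofReal_one, mul_one]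
        · intro q hq
          rw [ampF_boundary p q h0, if_neg hq, zero_pow two_ne_zero, ENNReal.ofReal_zero, zero_mul]
      · -- boundary must be in the tail
        have hb' : ∃ i : Fin (m+1), |(fun i : Fin (m+1) => y i.succ) i| = 1 := by
          obtain ⟨i, hi⟩ := hb
          rcases Fin.eq_zero_or_eq_succ i with h | ⟨j, rfl⟩
          · exact absurd (h ▸ hi) h0
          · exact ⟨j, hi⟩
        have hIH := ih (fun i => y i.succ) (fun i => hy i.succ) hb'
        calc (∑' q : ℕ, ENNReal.ofReal ((ampF p q (y 0)) ^ 2) * ampW m (fun i => y i.succ) q)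
            = ∑' q : ℕ, ENNReal.ofReal ((ampF p q (y 0)) ^ 2) := by
              apply tsum_congr
              intro q
              rw [hIH q, mul_one]
          _ = 1 := ofReal_tsum_sq_ampF p (hy 0)

noncomputable def ampC (m : ℕ) (y : Fin (m+1) → ℝ) (p : ℕ) (k : Fin m → ℕ) : ℝ :=
  y (Fin.last m) ^ (Fin.cons p k : Fin (m+1) → ℕ) (Fin.last m) *
    ∏ j : Fin m, ampF ((Fin.cons p k : Fin (m+1) → ℕ) j.castSucc)
      ((Fin.cons p k : Fin (m+1) → ℕ) j.succ) (y j.castSucc)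

lemma ampC_zero (y : Fin 1 → ℝ) (p : ℕ) (k : Fin 0 → ℕ) : ampC 0 y p k = y 0 ^ p := by
  unfold ampC
  have h0 : (Fin.last 0) = (0 : Fin 1) := rfl
  simp [h0]

lemma ampC_succ (m : ℕ) (y : Fin (m+2) → ℝ) (p q : ℕ) (k : Fin m → ℕ) :
    ampC (m+1) y p (Fin.cons q k) = ampF p q (y 0) * ampC m (fun i => y i.succ) q k := by
  unfold ampC
  rw [Fin.prod_univ_succ]
  have h1 : (Fin.cons p (Fin.cons q k) : Fin (m+2) → ℕ) 1 = q := rfl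
  simp only [← Fin.succ_last, ← Fin.succ_castSucc, Fin.cons_succ, Fin.castSucc_zero,
    Fin.cons_zero, h1]
  ring

lemma ampC_tsum : ∀ (m : ℕ) (y : Fin (m+1) → ℝ) (p : ℕ),
    (∑' k : Fin m → ℕ, ENNReal.ofReal (ampC m y p k ^ 2)) = ampW m y p := by
  intro m
  induction m with
  | zero =>
      intro y p
      rw [tsum_eq_single (fun i : Fin 0 => i.elim0)]
      · rw [ampC_zero]
        rfl
      · intro b hb
        exact absurd (funext fun i => i.elim0) hb
  | succ m ih =>
      intro y p
      rw [← Equiv.tsum_eq (Fin.consEquiv (fun _ : Fin (m+1) => ℕ))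
        (fun k => ENNReal.ofReal (ampC (m+1) y p k ^ 2))]
      show (∑' c : ℕ × (Fin m → ℕ),
        ENNReal.ofReal (ampC (m+1) y p ((Fin.consEquiv (fun _ : Fin (m+1) => ℕ)) (c.1, c.2)) ^ 2)) = _
      rw [ENNReal.tsum_prod (f := fun q k =>
        ENNReal.ofReal (ampC (m+1) y p ((Fin.consEquiv (fun _ : Fin (m+1) => ℕ)) (q, k)) ^ 2))]
      have hstep : ∀ (q : ℕ) (k : Fin m → ℕ),
          ENNReal.ofReal (ampC (m+1) y p ((Fin.consEquiv (fun _ : Fin (m+1) => ℕ)) (q, k)) ^ 2)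
            = ENNReal.ofReal ((ampF p q (y 0)) ^ 2)
              * ENNReal.ofReal (ampC m (fun i => y i.succ) q k ^ 2) := by
        intro q k
        have he : (Fin.consEquiv (fun _ : Fin (m+1) => ℕ)) (q, k) = Fin.cons q k := rfl
        rw [he, ampC_succ, mul_pow, ENNReal.ofReal_mul (sq_nonneg _)]
      calc (∑' (q : ℕ) (k : Fin m → ℕ),
              ENNReal.ofReal (ampC (m+1) y p ((Fin.consEquiv (fun _ : Fin (m+1) => ℕ)) (q, k)) ^ 2))
          = ∑' (q : ℕ), ENNReal.ofReal ((ampF p q (y 0)) ^ 2)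
              * ∑' (k : Fin m → ℕ), ENNReal.ofReal (ampC m (fun i => y i.succ) q k ^ 2) := by
            apply tsum_congr
            intro q
            rw [← ENNReal.tsum_mul_left]
            apply tsum_congr
            intro k
            exact hstep q k
        _ = ampW (m+1) y p := by
            apply tsum_congr
            intro q
            rw [ih (fun i => y i.succ) q]


/-- if `x` is a boundary point of the cube `[-1,1]^{n+1}` (i.e. some
    `|x_j| = 1`), then `Σ_k a(x,k)² = 1`, i.e. `φ_x` is inner. -/
theorem boundary_point_inner (n : ℕ) (hn : 1 ≤ n)
    (x : Fin (n+1) → ℝ) (hx : ∀ j, x j ∈ Set.Icc (-1 : ℝ) 1)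
    (hb : ∃ j, |x j| = 1) :
    HasSum (fun k : Fin (n+1) → ℕ => ampA n x k ^ 2) 1 := by
  have habs : ∀ j, |x j| ≤ 1 := fun j => abs_le.mpr ⟨(hx j).1, (hx j).2⟩
  have hENN : (∑' k : Fin (n+1) → ℕ, ENNReal.ofReal (ampA n x k ^ 2)) = 1 := by
    rw [← Equiv.tsum_eq (Fin.consEquiv (fun _ : Fin (n+1) => ℕ))
      (fun k => ENNReal.ofReal (ampA n x k ^ 2))]
    show (∑' c : ℕ × (Fin n → ℕ),
      ENNReal.ofReal (ampA n x ((Fin.consEquiv (fun _ : Fin (n+1) => ℕ)) (c.1, c.2)) ^ 2)) = 1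
    rw [ENNReal.tsum_prod (f := fun q k =>
      ENNReal.ofReal (ampA n x ((Fin.consEquiv (fun _ : Fin (n+1) => ℕ)) (q, k)) ^ 2))]
    rw [tsum_eq_single 1]
    · have hmain : ∀ k : Fin n → ℕ,
          ampA n x ((Fin.consEquiv (fun _ : Fin (n+1) => ℕ)) (1, k)) = ampC n x 1 k := by
        intro k
        have he : (Fin.consEquiv (fun _ : Fin (n+1) => ℕ)) (1, k) = Fin.cons 1 k := rfl
        rw [he]
        unfold ampA ampC
        rw [Fin.cons_zero, if_pos rfl, one_mul]
      calc (∑' k : Fin n → ℕ,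
            ENNReal.ofReal (ampA n x ((Fin.consEquiv (fun _ : Fin (n+1) => ℕ)) (1, k)) ^ 2))
          = ∑' k : Fin n → ℕ, ENNReal.ofReal (ampC n x 1 k ^ 2) :=
            tsum_congr fun k => by rw [hmain k]
        _ = ampW n x 1 := ampC_tsum n x 1
        _ = 1 := ampW_boundary n x habs hb 1
    · intro q hq
      have hz : ∀ k : Fin n → ℕ,
          ampA n x ((Fin.consEquiv (fun _ : Fin (n+1) => ℕ)) (q, k)) = 0 := by
        intro k
        have he : (Fin.consEquiv (fun _ : Fin (n+1) => ℕ)) (q, k) = Fin.cons q k := rfl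
        rw [he]
        unfold ampA
        rw [Fin.cons_zero, if_neg hq, zero_mul, zero_mul]
      calc (∑' k : Fin n → ℕ,
            ENNReal.ofReal (ampA n x ((Fin.consEquiv (fun _ : Fin (n+1) => ℕ)) (q, k)) ^ 2))
          = ∑' k : Fin n → ℕ, (0 : ℝ≥0∞) := tsum_congr fun k => by
              rw [hz k, zero_pow two_ne_zero, ENNReal.ofReal_zero]
        _ = 0 := tsum_zero
  have hsummable : Summable (fun k : Fin (n+1) → ℕ => ampA n x k ^ 2) := by
    have h1 := ENNReal.summable_toReal (f := fun k : Fin (n+1) → ℕ =>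
      ENNReal.ofReal (ampA n x k ^ 2)) (by rw [hENN]; exact ENNReal.one_ne_top)
    apply h1.congr
    intro k
    rw [ENNReal.toReal_ofReal (sq_nonneg _)]
  have htsum : (∑' k : Fin (n+1) → ℕ, ampA n x k ^ 2) = 1 := by
    have h2 : ENNReal.ofReal (∑' k : Fin (n+1) → ℕ, ampA n x k ^ 2) = ENNReal.ofReal 1 := by
      rw [ENNReal.ofReal_tsum_of_nonneg (fun k => sq_nonneg _) hsummable, hENN,
        ENNReal.ofReal_one]
    exact (ENNReal.ofReal_eq_ofReal_iff (tsum_nonneg fun k => sq_nonneg _) zero_le_one).mp h2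
  exact hsummable.hasSum_iff.mpr htsum
end

section
/- Let n ≥ 1 and let τ* ∈ ℝ^{n+1} have positive entries with k ↦ ⟨k,τ*⟩ injective on 𝓛^{τ*}. Define the cell C = {τ ∈ ℝ^{n+1} : all entries of τ are positive, 𝓛^τ = 𝓛^{τ*}, and for all k, k' ∈ 𝓛^{τ*}: ⟨k,τ⟩ ≤ ⟨k',τ⟩ ⇔ ⟨k,τ*⟩ ≤ ⟨k',τ*⟩}. Then: (i) C is convex; (ii) C is open in ℝ^{n+1}; (iii) C is closed under multiplication by positive scalars (αC = C for every α > 0); and (iv) the normalized cell Ĉ = C ∩ {x : ⟨𝟙,x⟩ = 1} is convex and open relative to the standard open simplex Δ_n = {x ∈ ℝ^{n+1} : all x_j > 0, ⟨𝟙,x⟩ = 1}. -/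
/-- `𝓛_n`: lattice points in `ℕ^{n+1}` supported on initial intervals. -/
def latticeL (n : ℕ) : Set (Fin (n+1) → ℕ) :=
  {k | ∀ j : Fin n, k j.castSucc = 0 → k j.succ = 0}

/-- The linear functional `L_τ(k) = ⟨k,τ⟩`. -/
noncomputable def ipL (n : ℕ) (k : Fin (n+1) → ℕ) (τ : Fin (n+1) → ℝ) : ℝ :=
  ∑ j, (k j : ℝ) * τ j

/-- `𝓛^τ = {k ∈ 𝓛_n : 0 < ⟨k,τ⟩ ≤ ⟨𝟙,τ⟩}`. -/
noncomputable def latticeLT (n : ℕ) (τ : Fin (n+1) → ℝ) : Set (Fin (n+1) → ℕ) :=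
  {k | k ∈ latticeL n ∧ 0 < ipL n k τ ∧ ipL n k τ ≤ ∑ j, τ j}

section helpers
variable {n : ℕ}

lemma continuous_ipL (k : Fin (n+1) → ℕ) : Continuous (ipL n k) := by
  unfold ipL
  exact continuous_finset_sum _ fun j _ => continuous_const.mul (continuous_apply j)

lemma continuous_sumτ : Continuous (fun τ : Fin (n+1) → ℝ => ∑ j, τ j) :=
  continuous_finset_sum _ fun j _ => continuous_apply j

lemma term_le_ipL (k : Fin (n+1) → ℕ) {τ : Fin (n+1) → ℝ} (h : ∀ j, 0 ≤ τ j) (j : Fin (n+1)) :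
    (k j : ℝ) * τ j ≤ ipL n k τ :=
  Finset.single_le_sum (f := fun i => (k i : ℝ) * τ i)
    (fun i _ => mul_nonneg (Nat.cast_nonneg _) (h i)) (Finset.mem_univ j)

lemma ipL_pos {k : Fin (n+1) → ℕ} {τ : Fin (n+1) → ℝ} (h : ∀ j, 0 < τ j) (hk : k ≠ 0) :
    0 < ipL n k τ := by
  obtain ⟨j, hj⟩ := Function.ne_iff.mp hk
  have h1 : 0 < (k j : ℝ) * τ j := by
    have : 0 < k j := Nat.pos_of_ne_zero hj
    exact mul_pos (by exact_mod_cast this) (h j)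
  exact lt_of_lt_of_le h1 (term_le_ipL k (fun i => (h i).le) j)

lemma ipL_zero (τ : Fin (n+1) → ℝ) : ipL n 0 τ = 0 := by simp [ipL]

lemma ipL_one (τ : Fin (n+1) → ℝ) : ipL n (fun _ => 1) τ = ∑ j, τ j := by simp [ipL]

lemma one_mem_latticeLT {τ : Fin (n+1) → ℝ} (h : ∀ j, 0 < τ j) :
    (fun _ => 1 : Fin (n+1) → ℕ) ∈ latticeLT n τ := by
  refine ⟨fun j hj => absurd hj one_ne_zero, ?_, le_of_eq (ipL_one τ)⟩
  rw [ipL_one]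
  exact Finset.sum_pos (fun j _ => h j) Finset.univ_nonempty

lemma ipL_comb (k : Fin (n+1) → ℕ) (a b : ℝ) (τ1 τ2 : Fin (n+1) → ℝ) :
    ipL n k (a • τ1 + b • τ2) = a * ipL n k τ1 + b * ipL n k τ2 := by
  simp only [ipL, Pi.add_apply, Pi.smul_apply, smul_eq_mul, mul_add, Finset.sum_add_distrib,
    Finset.mul_sum]
  congr 1 <;> exact Finset.sum_congr rfl fun j _ => by ring

lemma ipL_smul (k : Fin (n+1) → ℕ) (a : ℝ) (τ : Fin (n+1) → ℝ) :
    ipL n k (a • τ) = a * ipL n k τ := by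
  simp only [ipL, Pi.smul_apply, smul_eq_mul, Finset.mul_sum]
  exact Finset.sum_congr rfl fun j _ => by ring

lemma sum_comb (a b : ℝ) (τ1 τ2 : Fin (n+1) → ℝ) :
    ∑ j, (a • τ1 + b • τ2) j = a * ∑ j, τ1 j + b * ∑ j, τ2 j := by
  rw [← ipL_one (n := n), ← ipL_one (n := n), ← ipL_one (n := n), ipL_comb]

lemma sum_smul' (a : ℝ) (τ : Fin (n+1) → ℝ) : ∑ j, (a • τ) j = a * ∑ j, τ j := by
  rw [← ipL_one (n := n), ← ipL_one (n := n), ipL_smul]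

lemma isOpen_imp {α : Type*} [TopologicalSpace α] {P : Prop} {Q : α → Prop}
    (h : IsOpen {x | Q x}) : IsOpen {x | P → Q x} := by
  by_cases hP : P
  · simpa [hP] using h
  · simp [hP]

end helpers

open Pointwise in
/-- each cell of the travel-time domain is an open convex cone, and the
    normalized cell is a convex set, open relative to the standard simplex. -/
theorem cell_structure (n : ℕ) (hn : 1 ≤ n) (τs : Fin (n+1) → ℝ) (hτs : ∀ j, 0 < τs j)
    (hinj : Set.InjOn (fun k => ipL n k τs) (latticeLT n τs)) :
    let C : Set (Fin (n+1) → ℝ) :=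
      {τ | (∀ j, 0 < τ j) ∧ latticeLT n τ = latticeLT n τs ∧
        ∀ k ∈ latticeLT n τs, ∀ k' ∈ latticeLT n τs,
          (ipL n k τ ≤ ipL n k' τ ↔ ipL n k τs ≤ ipL n k' τs)}
    Convex ℝ C ∧ IsOpen C ∧ (∀ α : ℝ, 0 < α → α • C = C) ∧
      Convex ℝ (C ∩ {x | (∑ j, x j) = 1}) ∧
      ∃ U : Set (Fin (n+1) → ℝ), IsOpen U ∧
        C ∩ {x | (∑ j, x j) = 1} =
          U ∩ {x : Fin (n+1) → ℝ | (∀ j, 0 < x j) ∧ (∑ j, x j) = 1} := by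
  intro C
  have hCmem : ∀ τ : Fin (n+1) → ℝ, τ ∈ C ↔
      ((∀ j, 0 < τ j) ∧ latticeLT n τ = latticeLT n τs ∧
        ∀ k ∈ latticeLT n τs, ∀ k' ∈ latticeLT n τs,
          (ipL n k τ ≤ ipL n k' τ ↔ ipL n k τs ≤ ipL n k' τs)) := fun τ => Iff.rfl
  have hone_mem : (fun _ => 1 : Fin (n+1) → ℕ) ∈ latticeLT n τs := one_mem_latticeLT hτs
  -- strict order transfer
  have hstrict : ∀ τ ∈ C, ∀ k ∈ latticeLT n τs, ∀ k' ∈ latticeLT n τs,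
      ipL n k τs < ipL n k' τs → ipL n k τ < ipL n k' τ := by
    intro τ hτ k hk k' hk' hlt
    have h3 := ((hCmem τ).mp hτ).2.2
    have h1 : ipL n k τ ≤ ipL n k' τ := (h3 k hk k' hk').mpr hlt.le
    rcases h1.lt_or_eq with h | h
    · exact h
    · exact absurd ((h3 k' hk' k hk).mp h.ge) (not_le.mpr hlt)
  -- strict bound: for k in the lattice set, k ≠ 𝟙, ipL k τ < ∑ τ
  have hlt_one : ∀ τ ∈ C, ∀ k ∈ latticeLT n τs, k ≠ (fun _ => 1) → ipL n k τ < ∑ j, τ j := by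
    intro τ hτ k hk hne
    have hlts : ipL n k τs < ipL n (fun _ => 1) τs := by
      have hle : ipL n k τs ≤ ipL n (fun _ => 1) τs := by rw [ipL_one]; exact hk.2.2
      rcases lt_or_eq_of_le hle with h | h
      · exact h
      · exact absurd (hinj hk hone_mem h) hne
    rw [← ipL_one τ]
    exact hstrict τ hτ k hk _ hone_mem hlts
  have hposor : ∀ {a b : ℝ}, 0 ≤ a → 0 ≤ b → a + b = 1 → 0 < a ∨ 0 < b := by
    intro a b ha hb hab
    by_contra h
    push_neg at h
    linarith [h.1, h.2]
  -- convexity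
  have hconv : Convex ℝ C := by
    intro τ1 h1 τ2 h2 a b ha hb hab
    obtain ⟨h1p, h1L, h1o⟩ := (hCmem τ1).mp h1
    obtain ⟨h2p, h2L, h2o⟩ := (hCmem τ2).mp h2
    have combpos : ∀ {x1 x2 : ℝ}, 0 < x1 → 0 < x2 → 0 < a * x1 + b * x2 := by
      intro x1 x2 hx1 hx2
      rcases hposor ha hb hab with h | h
      · nlinarith [mul_nonneg hb hx2.le]
      · nlinarith [mul_nonneg ha hx1.le]
    have comble : ∀ {x1 y1 x2 y2 : ℝ}, x1 ≤ y1 → x2 ≤ y2 →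
        a * x1 + b * x2 ≤ a * y1 + b * y2 := by
      intro x1 y1 x2 y2 hx hy
      have := mul_le_mul_of_nonneg_left hx ha
      have := mul_le_mul_of_nonneg_left hy hb
      linarith
    have comblt : ∀ {x1 y1 x2 y2 : ℝ}, x1 < y1 → x2 < y2 →
        a * x1 + b * x2 < a * y1 + b * y2 := by
      intro x1 y1 x2 y2 hx hy
      rcases hposor ha hb hab with h | h
      · nlinarith [mul_le_mul_of_nonneg_left hy.le hb]
      · nlinarith [mul_le_mul_of_nonneg_left hx.le ha]
    refine (hCmem _).mpr ⟨?_, ?_, ?_⟩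
    · intro j
      have : (a • τ1 + b • τ2) j = a * τ1 j + b * τ2 j := rfl
      rw [this]
      exact combpos (h1p j) (h2p j)
    · ext k
      constructor
      · rintro ⟨hkL, hkpos, hkle⟩
        by_contra hknot
        have hk0 : k ≠ 0 := by
          rintro rfl
          rw [ipL_zero] at hkpos
          exact lt_irrefl 0 hkpos
        have hb1 : ∑ j, τ1 j < ipL n k τ1 := by
          have : k ∉ latticeLT n τ1 := h1L ▸ hknot
          by_contra hle
          exact this ⟨hkL, ipL_pos h1p hk0, not_lt.mp hle⟩
        have hb2 : ∑ j, τ2 j < ipL n k τ2 := by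
          have : k ∉ latticeLT n τ2 := h2L ▸ hknot
          by_contra hle
          exact this ⟨hkL, ipL_pos h2p hk0, not_lt.mp hle⟩
        rw [ipL_comb, sum_comb] at hkle
        exact absurd hkle (not_le.mpr (comblt hb1 hb2))
      · intro hk
        have hk1 : k ∈ latticeLT n τ1 := h1L.symm ▸ hk
        have hk2 : k ∈ latticeLT n τ2 := h2L.symm ▸ hk
        refine ⟨hk.1, ?_, ?_⟩
        · rw [ipL_comb]
          exact combpos hk1.2.1 hk2.2.1
        · rw [ipL_comb, sum_comb]
          exact comble hk1.2.2 hk2.2.2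
    · intro k hk k' hk'
      constructor
      · intro hle
        by_contra hnot
        have hlt := not_le.mp hnot
        have l1 := hstrict τ1 h1 k' hk' k hk hlt
        have l2 := hstrict τ2 h2 k' hk' k hk hlt
        rw [ipL_comb, ipL_comb] at hle
        exact absurd hle (not_le.mpr (comblt l1 l2))
      · intro hle
        rcases lt_or_eq_of_le hle with h | h
        · rw [ipL_comb, ipL_comb]
          exact (comblt (hstrict τ1 h1 k hk k' hk' h) (hstrict τ2 h2 k hk k' hk' h)).le
        · rw [hinj hk hk' h]
  -- scaling
  have hsmul_mem : ∀ α : ℝ, 0 < α → ∀ τ ∈ C, α • τ ∈ C := by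
    intro α hα τ hτ
    obtain ⟨hp, hL, ho⟩ := (hCmem τ).mp hτ
    refine (hCmem _).mpr ⟨fun j => mul_pos hα (hp j), ?_, ?_⟩
    · rw [← hL]
      ext k
      simp only [latticeLT, Set.mem_setOf_eq, ipL_smul, sum_smul']
      rw [mul_pos_iff_of_pos_left, mul_le_mul_iff_right₀ hα]
      exact hα
    · intro k hk k' hk'
      rw [ipL_smul, ipL_smul, mul_le_mul_iff_right₀ hα]
      exact ho k hk k' hk'
  have hsmul : ∀ α : ℝ, 0 < α → α • C = C := by
    intro α hα
    ext x
    simp only [Set.mem_smul_set]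
    constructor
    · rintro ⟨y, hy, rfl⟩
      exact hsmul_mem α hα y hy
    · intro hx
      exact ⟨α⁻¹ • x, hsmul_mem α⁻¹ (inv_pos.mpr hα) x hx,
        by rw [smul_smul, mul_inv_cancel₀ hα.ne', one_smul]⟩
  have hopen : IsOpen C := by
    rw [isOpen_iff_mem_nhds]
    intro τ hτ
    obtain ⟨hp, hL, ho⟩ := (hCmem τ).mp hτ
    obtain ⟨j0, -, hj0⟩ := Finset.exists_min_image Finset.univ τ Finset.univ_nonempty
    set δ : ℝ := τ j0 with hδdef
    have hδ : 0 < δ := hp j0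
    have hδle : ∀ j, δ ≤ τ j := fun j => hj0 j (Finset.mem_univ j)
    obtain ⟨j1, -, hj1⟩ := Finset.exists_min_image Finset.univ τs Finset.univ_nonempty
    set δs : ℝ := τs j1 with hδsdef
    have hδs : 0 < δs := hτs j1
    have hδsle : ∀ j, δs ≤ τs j := fun j => hj1 j (Finset.mem_univ j)
    set M : ℝ := (∑ j, τ j) + 1 with hMdef
    have hsum_pos : 0 < ∑ j, τ j := Finset.sum_pos (fun j _ => hp j) Finset.univ_nonempty
    have hM : 0 < M := by rw [hMdef]; linarith
    set N : ℕ := ⌈max (2*M/δ) ((∑ j, τs j)/δs)⌉₊ with hNdef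
    have hN1 : 2*M/δ ≤ (N:ℝ) := le_trans (le_max_left _ _) (Nat.le_ceil _)
    have hN2 : (∑ j, τs j)/δs ≤ (N:ℝ) := le_trans (le_max_right _ _) (Nat.le_ceil _)
    set F : Set (Fin (n+1) → ℕ) := {k | ∀ j, k j ≤ N} with hFdef
    have hFfin : F.Finite := by
      have hFeq : F = Set.pi Set.univ (fun _ : Fin (n+1) => Set.Iic N) := by
        ext k
        simp [hFdef, Set.mem_pi, Pi.le_def]
      rw [hFeq]
      exact Set.Finite.pi fun _ => Set.finite_Iic N
    have hsubF : latticeLT n τs ⊆ F := by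
      intro k hk j
      have h1 : (k j : ℝ) * τs j ≤ ∑ i, τs i :=
        le_trans (term_le_ipL k (fun i => (hτs i).le) j) hk.2.2
      have h2 : (k j : ℝ) ≤ (∑ i, τs i) / δs := by
        rw [le_div_iff₀ hδs]
        calc (k j:ℝ) * δs ≤ (k j:ℝ) * τs j :=
              mul_le_mul_of_nonneg_left (hδsle j) (Nat.cast_nonneg _)
          _ ≤ _ := h1
      exact_mod_cast h2.trans hN2
    set V : Set (Fin (n+1) → ℝ) :=
      ({τ' | ∀ j, τ j / 2 < τ' j} ∩ {τ' | ∑ j, τ' j < M}) ∩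
      ⋂ k ∈ F, (({τ' | k ∈ latticeLT n τs ∧ k ≠ (fun _ => 1) → ipL n k τ' < ∑ j, τ' j} ∩
        {τ' | (k ∈ latticeL n ∧ k ∉ latticeLT n τs ∧ k ≠ 0) → ∑ j, τ' j < ipL n k τ'}) ∩
        ⋂ k' ∈ F, {τ' | (k ∈ latticeLT n τs ∧ k' ∈ latticeLT n τs ∧ ipL n k τs < ipL n k' τs) →
          ipL n k τ' < ipL n k' τ'}) with hVdef
    have hVopen : IsOpen V := by
      refine IsOpen.inter (IsOpen.inter ?_ ?_) ?_
      · have heq : {τ' : Fin (n+1) → ℝ | ∀ j, τ j / 2 < τ' j} =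
            ⋂ j, {τ' : Fin (n+1) → ℝ | τ j / 2 < τ' j} := by
          ext x
          simp
        rw [heq]
        exact isOpen_iInter_of_finite fun j => isOpen_lt continuous_const (continuous_apply j)
      · exact isOpen_lt continuous_sumτ continuous_const
      · refine Set.Finite.isOpen_biInter hFfin fun k _ => ?_
        refine IsOpen.inter (IsOpen.inter ?_ ?_) ?_
        · exact isOpen_imp (isOpen_lt (continuous_ipL k) continuous_sumτ)
        · exact isOpen_imp (isOpen_lt continuous_sumτ (continuous_ipL k))
        · refine Set.Finite.isOpen_biInter hFfin fun k' _ => ?_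
          exact isOpen_imp (isOpen_lt (continuous_ipL k) (continuous_ipL k'))
    have hbig : ∀ τ' ∈ V, ∀ k : Fin (n+1) → ℕ, k ∉ F → ¬ (ipL n k τ' ≤ ∑ j, τ' j) := by
      rintro τ' ⟨⟨hτ'1, hτ'2⟩, -⟩ k hkF hle
      have hτ'1' : ∀ j, τ j / 2 < τ' j := hτ'1
      have hτ'2' : ∑ j, τ' j < M := hτ'2
      simp only [hFdef, Set.mem_setOf_eq, not_forall, not_le] at hkF
      obtain ⟨j, hj⟩ := hkF
      have hkj : (N:ℝ) + 1 ≤ (k j : ℝ) := by exact_mod_cast hj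
      have h1 : 2*M/δ < (k j : ℝ) := by linarith
      have hτ'j : δ / 2 < τ' j := lt_of_le_of_lt (by linarith [hδle j]) (hτ'1' j)
      have h2 : M < (k j:ℝ) * τ' j := by
        calc M = 2*M/δ * (δ/2) := by field_simp
          _ < (k j:ℝ) * τ' j :=
            mul_lt_mul' h1.le hτ'j (by positivity) (lt_of_le_of_lt (by positivity) h1)
      have hτ'pos : ∀ i, 0 ≤ τ' i := fun i => (lt_trans (by linarith [hp i]) (hτ'1' i)).le
      have h3 := term_le_ipL k hτ'pos j
      linarith
    have hτV : τ ∈ V := by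
      refine ⟨⟨?_, ?_⟩, ?_⟩
      · intro j
        have := hp j
        linarith
      · show (∑ j, τ j) < M
        rw [hMdef]
        exact lt_add_one _
      refine Set.mem_iInter₂.mpr fun k _ => ?_
      refine ⟨⟨?_, ?_⟩, ?_⟩
      · rintro ⟨hk, hne⟩
        exact hlt_one τ hτ k hk hne
      · rintro ⟨hkL, hknot, hk0⟩
        have hnotτ : k ∉ latticeLT n τ := fun h => hknot (hL ▸ h)
        by_contra hcon
        push_neg at hcon
        exact hnotτ ⟨hkL, ipL_pos hp hk0, hcon⟩
      · refine Set.mem_iInter₂.mpr fun k' _ => ?_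
        rintro ⟨hk, hk', hlt⟩
        exact hstrict τ hτ k hk k' hk' hlt
    have hVC : V ⊆ C := by
      intro τ' hτ'V
      obtain ⟨⟨hv1, hv2⟩, hv3⟩ := hτ'V
      have hv1' : ∀ j, τ j / 2 < τ' j := hv1
      have hp' : ∀ j, 0 < τ' j := fun j => lt_trans (by linarith [hp j]) (hv1' j)
      have cond1 : ∀ k ∈ F, k ∈ latticeLT n τs → k ≠ (fun _ => 1) →
          ipL n k τ' < ∑ j, τ' j := by
        intro k hkF hk hne
        exact (Set.mem_iInter₂.mp hv3 k hkF).1.1 ⟨hk, hne⟩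
      have cond2 : ∀ k ∈ F, k ∈ latticeL n → k ∉ latticeLT n τs → k ≠ 0 →
          ∑ j, τ' j < ipL n k τ' := by
        intro k hkF hkL hknot hk0
        exact (Set.mem_iInter₂.mp hv3 k hkF).1.2 ⟨hkL, hknot, hk0⟩
      have cond3 : ∀ k ∈ F, ∀ k' ∈ F, k ∈ latticeLT n τs → k' ∈ latticeLT n τs →
          ipL n k τs < ipL n k' τs → ipL n k τ' < ipL n k' τ' := by
        intro k hkF k' hk'F hk hk' hlt
        exact Set.mem_iInter₂.mp (Set.mem_iInter₂.mp hv3 k hkF).2 k' hk'F ⟨hk, hk', hlt⟩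
      refine (hCmem τ').mpr ⟨hp', ?_, ?_⟩
      · ext k
        constructor
        · rintro ⟨hkL, hkpos, hkle⟩
          have hkF : k ∈ F := by
            by_contra h
            exact hbig τ' ⟨⟨hv1, hv2⟩, hv3⟩ k h hkle
          by_contra hknot
          have hk0 : k ≠ 0 := by
            rintro rfl
            rw [ipL_zero] at hkpos
            exact lt_irrefl 0 hkpos
          exact absurd hkle (not_le.mpr (cond2 k hkF hkL hknot hk0))
        · intro hk
          have hkF : k ∈ F := hsubF hk
          have hk0 : k ≠ 0 := by
            rintro rfl
            have := hk.2.1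
            rw [ipL_zero] at this
            exact lt_irrefl 0 this
          refine ⟨hk.1, ipL_pos hp' hk0, ?_⟩
          by_cases hne : k = (fun _ => 1)
          · subst hne
            rw [ipL_one]
          · exact (cond1 k hkF hk hne).le
      · intro k hk k' hk'
        have hkF := hsubF hk
        have hk'F := hsubF hk'
        constructor
        · intro hle
          by_contra hnot
          exact absurd hle (not_le.mpr (cond3 k' hk'F k hkF hk' hk (not_le.mp hnot)))
        · intro hle
          rcases lt_or_eq_of_le hle with h | h
          · exact (cond3 k hkF k' hk'F hk hk' h).le
          · rw [hinj hk hk' h]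
    exact Filter.mem_of_superset (hVopen.mem_nhds hτV) hVC
  refine ⟨hconv, hopen, hsmul, ?_, ?_⟩
  · refine hconv.inter ?_
    intro x hx y hy a b ha hb hab
    simp only [Set.mem_setOf_eq] at *
    rw [sum_comb, hx, hy]
    linarith
  · refine ⟨C, hopen, ?_⟩
    ext x
    constructor
    · rintro ⟨hxC, hx1⟩
      exact ⟨hxC, ((hCmem x).mp hxC).1, hx1⟩
    · rintro ⟨hxC, -, hx1⟩
      exact ⟨hxC, hx1⟩
end

section
/- Fix integers n ≥ 2, 1 ≤ j ≤ n-1, m ≥ 1. Let k^7 ∈ ℕ^{n+1} be given by k^7_i = 1 for 0 ≤ i ≤ j, k^7_{j+1} = 2m, and k^7_i = 0 for i > j+1. Let x ∈ [-1,1]^{n+1} and write ã_7 = a(x, k^7). If ã_7 ≠ 0, then x_j and ã_7 have opposite signs: x_j · ã_7 < 0 (equivalently, x_j/|x_j| = -ã_7/|ã_7|). -/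
lemma ampF_one_one (x : ℝ) : ampF 1 1 x = 1 - x ^ 2 := by
  simp [ampF]

lemma ampF_zero_zero (x : ℝ) : ampF 0 0 x = 1 := by simp [ampF]

lemma ampF_nat_zero (p : ℕ) (x : ℝ) : ampF (p : ℤ) 0 x = x ^ p := by
  simp [ampF]

lemma ampF_one_two_mul (m : ℕ) (hm : 1 ≤ m) (x : ℝ) :
    ampF 1 ((2 * m : ℕ) : ℤ) x = -(x ^ (2 * m - 1) * (1 - x ^ 2)) := by
  have h1 : ¬((1:ℤ) < 0 ∨ ((2*m:ℕ):ℤ) < 0) := by push_neg; constructor <;> positivity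
  have h2 : ((2*m:ℕ):ℤ) ≠ 0 := by positivity
  rw [ampF, if_neg h1, if_neg h2, if_neg one_ne_zero]
  have hmin : (min 1 ((2*m:ℕ):ℤ)).toNat = 1 := by omega
  have htn : (((2*m:ℕ):ℤ)).toNat = 2*m := by omega
  rw [hmin, htn, Finset.Icc_self, Finset.sum_singleton]
  have he : 1 + 2*m - 2*1 = 2*m-1 := by omega
  have hodd : Odd (2*m-1) := ⟨m-1, by omega⟩
  simp [he, hodd.neg_one_pow]

/-- the sign of `x_j` from the amplitude at the lattice point
    `k⁷ = 𝟙^j + 2m·e^{j+1}`. -/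
theorem sign_lemma (n j m : ℕ) (hn : 2 ≤ n) (hj1 : 1 ≤ j) (hj2 : j ≤ n - 1) (hm : 1 ≤ m)
    (k7 : Fin (n+1) → ℕ)
    (hk7 : ∀ i : Fin (n+1), k7 i =
      if (i : ℕ) ≤ j then 1 else if (i : ℕ) = j + 1 then 2 * m else 0)
    (x : Fin (n+1) → ℝ) (hx : ∀ i, x i ∈ Set.Icc (-1 : ℝ) 1)
    (ha : ampA n x k7 ≠ 0) :
    x ⟨j, by omega⟩ * ampA n x k7 < 0 := by
  have hjn : j < n := by omega
  set i₀ : Fin n := ⟨j, hjn⟩ with hi₀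
  set xj : ℝ := x ⟨j, by omega⟩ with hxj
  have hk0 : k7 0 = 1 := by rw [hk7]; simp [hj1]
  have hcast : (i₀.castSucc : Fin (n+1)) = ⟨j, by omega⟩ := rfl
  have hksucc : k7 i₀.succ = 2 * m := by
    have : ((i₀.succ : Fin (n+1)) : ℕ) = j + 1 := rfl
    rw [hk7, this]; split_ifs <;> omega
  have hkcast : k7 i₀.castSucc = 1 := by
    have : ((i₀.castSucc : Fin (n+1)) : ℕ) = j := rfl
    rw [hk7, this]; split_ifs <;> omega
  have hFj : ampF (k7 i₀.castSucc) (k7 i₀.succ) (x i₀.castSucc)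
      = -(xj ^ (2*m-1) * (1 - xj ^ 2)) := by
    rw [hkcast, hksucc, hcast, ← hxj, Nat.cast_one]
    exact ampF_one_two_mul m hm xj
  have hsplit : (∏ i : Fin n, ampF (k7 i.castSucc) (k7 i.succ) (x i.castSucc))
      = ampF (k7 i₀.castSucc) (k7 i₀.succ) (x i₀.castSucc) *
        ∏ i ∈ Finset.univ.erase i₀, ampF (k7 i.castSucc) (k7 i.succ) (x i.castSucc) :=
    (Finset.mul_prod_erase Finset.univ
      (fun i => ampF (k7 i.castSucc) (k7 i.succ) (x i.castSucc)) (Finset.mem_univ i₀)).symm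
  have hQ : 0 ≤ ∏ i ∈ Finset.univ.erase i₀, ampF (k7 i.castSucc) (k7 i.succ) (x i.castSucc) := by
    apply Finset.prod_nonneg
    intro i hi
    have hine : (i : ℕ) ≠ j := by
      intro h
      exact (Finset.mem_erase.mp hi).1 (by ext; exact h)
    have hxi := hx i.castSucc
    have hx1 : 0 ≤ 1 - (x i.castSucc)^2 := by
      simp only [Set.mem_Icc] at hxi; nlinarith [hxi.1, hxi.2]
    have hcs : ((i.castSucc : Fin (n+1)) : ℕ) = (i : ℕ) := rfl
    have hs : ((i.succ : Fin (n+1)) : ℕ) = (i : ℕ) + 1 := rfl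
    rcases lt_trichotomy (i : ℕ) j with h | h | h
    · have h1 : k7 i.castSucc = 1 := by rw [hk7, hcs]; split_ifs <;> omega
      have h2 : k7 i.succ = 1 := by rw [hk7, hs]; split_ifs <;> omega
      rw [h1, h2, Nat.cast_one, ampF_one_one]
      exact hx1
    · exact absurd h hine
    · have h2 : k7 i.succ = 0 := by rw [hk7, hs]; split_ifs <;> omega
      rw [h2, Nat.cast_zero, ampF_nat_zero]
      rcases Nat.eq_or_lt_of_le (Nat.succ_le_of_lt h) with h' | h'
      · have h1 : k7 i.castSucc = 2 * m := by rw [hk7, hcs]; split_ifs <;> omega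
        rw [h1]
        rw [pow_mul]; positivity
      · have h1 : k7 i.castSucc = 0 := by rw [hk7, hcs]; split_ifs <;> omega
        rw [h1]; norm_num
  -- the x_n factor
  have hlast : 0 ≤ x (Fin.last n) ^ k7 (Fin.last n) := by
    have hl : ((Fin.last n : Fin (n+1)) : ℕ) = n := rfl
    rcases Nat.eq_or_lt_of_le (by omega : j + 1 ≤ n) with h' | h'
    · have : k7 (Fin.last n) = 2 * m := by rw [hk7, hl]; split_ifs <;> omega
      rw [this, pow_mul]; positivity
    · have : k7 (Fin.last n) = 0 := by rw [hk7, hl]; split_ifs <;> omega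
      rw [this]; norm_num
  set Q := ∏ i ∈ Finset.univ.erase i₀, ampF (k7 i.castSucc) (k7 i.succ) (x i.castSucc) with hQdef
  set C := x (Fin.last n) ^ k7 (Fin.last n) * Q with hC
  have hCnn : 0 ≤ C := mul_nonneg hlast hQ
  have hAeq : ampA n x k7 = -(xj ^ (2*m-1) * (1 - xj ^ 2)) * C := by
    rw [ampA, if_pos hk0, hsplit, hFj, hC]; ring
  have hCne : C ≠ 0 := by
    intro h; apply ha; rw [hAeq, h, mul_zero]
  have hFne : xj ^ (2*m-1) * (1 - xj ^ 2) ≠ 0 := by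
    intro h; apply ha; rw [hAeq, h]; ring
  have hxjne : xj ≠ 0 := by
    intro h; apply hFne; rw [h]; simp [Nat.sub_ne_zero_of_lt (by omega : 1 < 2*m) ] <;> omega
  have h1xne : 1 - xj ^ 2 ≠ 0 := by
    intro h; apply hFne; rw [h]; ring
  have hxjIcc := hx ⟨j, by omega⟩
  have hxj1 : 0 ≤ 1 - xj ^ 2 := by
    simp only [Set.mem_Icc] at hxjIcc
    rw [hxj]; nlinarith [hxjIcc.1, hxjIcc.2]
  have hCpos : 0 < C := lt_of_le_of_ne hCnn (Ne.symm hCne)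
  have h1xpos : 0 < 1 - xj ^ 2 := lt_of_le_of_ne hxj1 (Ne.symm h1xne)
  have key : xj * ampA n x k7 = -(xj ^ (2*m) * (1 - xj ^ 2) * C) := by
    rw [hAeq]
    have : xj * xj ^ (2*m-1) = xj ^ (2*m) := by
      rw [← pow_succ']
      congr 1
      omega
    linear_combination (-(1 - xj ^ 2) * C) * this
  show xj * ampA n x k7 < 0
  rw [key]
  have hsq : 0 < xj ^ 2 := (sq_nonneg xj).lt_of_ne (fun h => hxjne (by nlinarith [sq_nonneg xj]))
  have hpow : 0 < xj ^ (2*m) := by rw [pow_mul]; exact pow_pos hsq m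
  nlinarith [mul_pos (mul_pos hpow h1xpos) hCpos]
end
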